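/- Let R be a UFD of characteristic zero and let D be a non-zero R-derivation on R[x,y]. If there exists a closed polynomial f ∈ R[x,y] \ R such that D(f) = 0 and Q(R)[f] ∩ R[x,y] = R[f], then the kernel R[x,y]^D equals R[f]. -/

import Mathlib

open MvPolynomial

noncomputable section

namespace KClosedAux

theorem fin2_finsupp_ext {m m' : Fin 2 →₀ ℕ} (h0 : m 0 = m' 0) (h1 : m 1 = m' 1) : m = m' := by
  ext a
  revert a
  rw [Fin.forall_fin_two]
  exact ⟨h0, h1⟩

theorem single_add_single_apply_zero (j k : ℕ) :
    (Finsupp.single (0 : Fin 2) j + Finsupp.single (1 : Fin 2) k) (0 : Fin 2) = j := by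
  rw [Finsupp.add_apply, Finsupp.single_apply, Finsupp.single_apply]
  simp

theorem single_add_single_apply_one (j k : ℕ) :
    (Finsupp.single (0 : Fin 2) j + Finsupp.single (1 : Fin 2) k) (1 : Fin 2) = k := by
  rw [Finsupp.add_apply, Finsupp.single_apply, Finsupp.single_apply]
  norm_num

theorem fin2_eq_single_add_single (m : Fin 2 →₀ ℕ) :
    m = Finsupp.single 0 (m 0) + Finsupp.single 1 (m 1) :=
  fin2_finsupp_ext (single_add_single_apply_zero _ _).symm (single_add_single_apply_one _ _).symm

variable {S : Type*} [CommSemiring S]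

theorem monomial_eq_prod (m : Fin 2 →₀ ℕ) (a : S) :
    (monomial m a : MvPolynomial (Fin 2) S) = C a * X 0 ^ (m 0) * X 1 ^ (m 1) := by
  rw [X_pow_eq_monomial, X_pow_eq_monomial, C_apply, monomial_mul, monomial_mul, mul_one, mul_one]
  rw [show (0 : Fin 2 →₀ ℕ) + Finsupp.single 0 (m 0) + Finsupp.single 1 (m 1)
      = Finsupp.single 0 (m 0) + Finsupp.single 1 (m 1) by rw [zero_add]]
  rw [← fin2_eq_single_add_single m]

theorem eq_C_of_isUnit {K : Type*} [Field K] {h : MvPolynomial (Fin 2) K} (hu : IsUnit h) :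
    ∃ c : K, h = C c := by
  set e1 := MvPolynomial.finSuccEquiv K 1 with he1
  have hu1 : IsUnit (e1 h) := hu.map e1
  obtain ⟨w, hw⟩ := Polynomial.natDegree_eq_zero.mp (Polynomial.natDegree_eq_zero_of_isUnit hu1)
  have huw : IsUnit w := Polynomial.isUnit_C.mp (hw ▸ hu1)
  set e2 := MvPolynomial.finSuccEquiv K 0 with he2
  obtain ⟨z, hz⟩ := Polynomial.natDegree_eq_zero.mp
    (Polynomial.natDegree_eq_zero_of_isUnit (huw.map e2))
  obtain ⟨c, hc⟩ := MvPolynomial.C_surjective (Fin 0) z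
  refine ⟨c, ?_⟩
  have k0 : e2.symm (Polynomial.C (C c)) = C c := RingHom.congr_fun (finSuccEquiv_comp_C_eq_C (R := K) 0) c
  have hw2 : w = C c := by
    have : e2.symm (Polynomial.C z) = w := by rw [hz]; exact e2.symm_apply_apply w
    rw [← this, ← hc, k0]
  have k1 : e1.symm (Polynomial.C (C c)) = C c := RingHom.congr_fun (finSuccEquiv_comp_C_eq_C (R := K) 1) c
  have : e1.symm (Polynomial.C w) = h := by rw [hw]; exact e1.symm_apply_apply h
  rw [← this, hw2, k1]


/-- A nonconstant polynomial in two variables over a field is transcendental: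
any univariate polynomial annihilating it is zero. -/
theorem eq_zero_of_aeval_eq_zero {K : Type*} [Field K] {h : MvPolynomial (Fin 2) K}
    (hh : ∀ c : K, h ≠ C c) {q : Polynomial K} (hq : Polynomial.aeval h q = 0) : q = 0 := by
  by_contra hq0
  have halg : IsAlgebraic K h := ⟨q, hq0, hq⟩
  set a0 : K := coeff 0 h with ha0
  have hne : h - C a0 ≠ 0 := fun hz => hh a0 (by rwa [sub_eq_zero] at hz)
  have hint : IsIntegral K (h - C a0) := by
    refine IsIntegral.sub halg.isIntegral ?_
    rw [← MvPolynomial.algebraMap_eq]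
    exact isIntegral_algebraMap
  set p := minpoly K (h - C a0) with hp
  have hc0 : p.coeff 0 ≠ 0 := minpoly.coeff_zero_ne_zero hint hne
  have haev : Polynomial.aeval (h - C a0) p = 0 := minpoly.aeval K _
  have hsplit : Polynomial.aeval (h - C a0) p.divX * (h - C a0) + C (p.coeff 0) = 0 := by
    have := congrArg (Polynomial.aeval (h - C a0)) (Polynomial.divX_mul_X_add p)
    rw [map_add, map_mul, Polynomial.aeval_X, Polynomial.aeval_C, haev] at this
    rw [← MvPolynomial.algebraMap_eq]
    exact this
  have H : (h - C a0) * Polynomial.aeval (h - C a0) p.divX = - C (p.coeff 0) := by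
    linear_combination hsplit
  have hunit : IsUnit (h - C a0) := by
    apply IsUnit.of_mul_eq_one (C (-(p.coeff 0)⁻¹) * Polynomial.aeval (h - C a0) p.divX)
    calc (h - C a0) * (C (-(p.coeff 0)⁻¹) * Polynomial.aeval (h - C a0) p.divX)
        = C (-(p.coeff 0)⁻¹) * ((h - C a0) * Polynomial.aeval (h - C a0) p.divX) := by ring
      _ = C (-(p.coeff 0)⁻¹) * (- C (p.coeff 0)) := by rw [H]
      _ = C (-(p.coeff 0)⁻¹ * -p.coeff 0) := by rw [← map_neg, ← map_mul]
      _ = 1 := by rw [neg_mul_neg, inv_mul_cancel₀ hc0, map_one]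
  obtain ⟨c, hc⟩ := eq_C_of_isUnit hunit
  have : h = C (c + a0) := by rw [map_add]; linear_combination hc
  exact hh _ this

/-- polynomials of total degree at most `M` lie in the span of the monomials `X0^a X1^b`. -/
theorem mem_span_of_totalDegree_le {K : Type*} [Field K] (M : ℕ) (p : MvPolynomial (Fin 2) K)
    (hp : p.totalDegree ≤ M) :
    p ∈ Submodule.span K (Set.range fun ab : Fin (M + 1) × Fin (M + 1) =>
      (X 0 : MvPolynomial (Fin 2) K) ^ (ab.1 : ℕ) * X 1 ^ (ab.2 : ℕ)) := by
  rw [← support_sum_monomial_coeff p]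
  apply Submodule.sum_mem
  intro m hm
  have hsum : m 0 + m 1 ≤ M := by
    have h1 := MvPolynomial.le_totalDegree hm
    have h2 : (m.sum fun _ e => e) = m 0 + m 1 := by
      rw [Finsupp.sum_fintype _ _ (fun _ => rfl)]
      exact Fin.sum_univ_two _
    omega
  have hrw : (monomial m (coeff m p) : MvPolynomial (Fin 2) K)
      = (coeff m p) • ((X 0 : MvPolynomial (Fin 2) K) ^ (m 0) * X 1 ^ (m 1)) := by
    rw [smul_eq_C_mul, monomial_eq_prod, mul_assoc]
  rw [hrw]
  exact Submodule.smul_mem _ _ (Submodule.subset_span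
    ⟨(⟨m 0, by omega⟩, ⟨m 1, by omega⟩), rfl⟩)

/-- Any three polynomials in `K[x,y]` admit a nontrivial linear relation among
their mixed powers (dimension count). -/
theorem not_linearIndependent_triple {K : Type*} [Field K]
    (u1 u2 u3 : MvPolynomial (Fin 2) K) :
    ∃ N : ℕ, 0 < N ∧ ¬ LinearIndependent K (fun v : Fin N × Fin N × Fin N =>
      u1 ^ (v.1 : ℕ) * u2 ^ (v.2.1 : ℕ) * u3 ^ (v.2.2 : ℕ)) := by
  obtain ⟨e, he1, hd1, hd2, hd3⟩ : ∃ e : ℕ, 1 ≤ e ∧ u1.totalDegree ≤ e ∧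
      u2.totalDegree ≤ e ∧ u3.totalDegree ≤ e :=
    ⟨u1.totalDegree + u2.totalDegree + u3.totalDegree + 1, by omega, by omega, by omega, by omega⟩
  obtain ⟨N, M, hN1, hM1, hlt⟩ : ∃ N M : ℕ, 0 < N ∧ M = N * e + N * e + N * e ∧ (M + 1) ^ 2 < N ^ 3 := by
    refine ⟨27 * e ^ 2, 3 * (27 * e ^ 2) * e, by positivity, by ring, ?_⟩
    nlinarith [pow_pos (by omega : 0 < e) 2, pow_pos (by omega : 0 < e) 6]
  refine ⟨N, hN1, ?_⟩
  intro hli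
  set β : Fin (M + 1) × Fin (M + 1) → MvPolynomial (Fin 2) K :=
    fun ab => (X 0 : MvPolynomial (Fin 2) K) ^ (ab.1 : ℕ) * X 1 ^ (ab.2 : ℕ) with hβ
  set W := Submodule.span K (Set.range β) with hW
  have hmem : ∀ v : Fin N × Fin N × Fin N,
      (u1 ^ (v.1 : ℕ) * u2 ^ (v.2.1 : ℕ) * u3 ^ (v.2.2 : ℕ)) ∈ W := by
    intro v
    apply mem_span_of_totalDegree_le
    have b1 : (u1 ^ (v.1 : ℕ)).totalDegree ≤ N * e := by
      refine le_trans (totalDegree_pow _ _) ?_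
      exact Nat.mul_le_mul (le_of_lt v.1.isLt) hd1
    have b2 : (u2 ^ (v.2.1 : ℕ)).totalDegree ≤ N * e := by
      refine le_trans (totalDegree_pow _ _) ?_
      exact Nat.mul_le_mul (le_of_lt v.2.1.isLt) hd2
    have b3 : (u3 ^ (v.2.2 : ℕ)).totalDegree ≤ N * e := by
      refine le_trans (totalDegree_pow _ _) ?_
      exact Nat.mul_le_mul (le_of_lt v.2.2.isLt) hd3
    have hmul1 := totalDegree_mul (u1 ^ (v.1 : ℕ) * u2 ^ (v.2.1 : ℕ)) (u3 ^ (v.2.2 : ℕ))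
    have hmul2 := totalDegree_mul (u1 ^ (v.1 : ℕ)) (u2 ^ (v.2.1 : ℕ))
    omega
  set w' : Fin N × Fin N × Fin N → W := fun v => ⟨_, hmem v⟩ with hw'
  have hli' : LinearIndependent K w' := by
    apply LinearIndependent.of_comp W.subtype
    exact hli
  letI := Classical.decEq (MvPolynomial (Fin 2) K)
  haveI : Module.Finite K W := FiniteDimensional.span_of_finite K (Set.finite_range β)
  have hcard := hli'.fintype_card_le_finrank
  have hrank : Module.finrank K W ≤ (M + 1) ^ 2 := by
    refine le_trans (finrank_span_le_card _) ?_
    rw [Set.toFinset_range]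
    refine le_trans (Finset.card_image_le) ?_
    simp [sq]
  have hcard2 : Fintype.card (Fin N × Fin N × Fin N) = N ^ 3 := by
    simp only [Fintype.card_prod, Fintype.card_fin]
    ring
  rw [hcard2] at hcard
  omega


/-- Kernel of a derivation, as a subalgebra. -/
def kerSubalgebra {R A : Type*} [CommRing R] [CommRing A] [Algebra R A]
    (D : Derivation R A A) : Subalgebra R A where
  carrier := {a | D a = 0}
  add_mem' := fun {a b} ha hb => by
    simp only [Set.mem_setOf_eq] at *
    rw [map_add, ha, hb, add_zero]
  mul_mem' := fun {a b} ha hb => by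
    simp only [Set.mem_setOf_eq] at *
    rw [D.leibniz, ha, hb, smul_zero, smul_zero, add_zero]
  algebraMap_mem' := fun r => D.map_algebraMap r

theorem mem_kerSubalgebra_iff {R A : Type*} [CommRing R] [CommRing A] [Algebra R A]
    (D : Derivation R A A) (a : A) : a ∈ kerSubalgebra D ↔ D a = 0 := Iff.rfl

/-- Chain rule for a derivation applied to a polynomial evaluation whose
coefficients are killed by the derivation. -/
theorem derivation_eval₂ {R A S : Type*} [CommRing R] [CommRing A] [Algebra R A] [CommRing S]
    (D : Derivation R A A) (φ : S →+* A) (hφ : ∀ s, D (φ s) = 0) (t : A) (p : Polynomial S) :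
    D (p.eval₂ φ t) = p.derivative.eval₂ φ t * D t := by
  induction p using Polynomial.induction_on' with
  | add p q hp hq =>
    rw [Polynomial.eval₂_add, map_add, hp, hq, Polynomial.derivative_add, Polynomial.eval₂_add,
      add_mul]
  | monomial n a =>
    rw [Polynomial.eval₂_monomial, Polynomial.derivative_monomial, Polynomial.eval₂_monomial]
    cases n with
    | zero =>
      simp [hφ]
    | succ m =>
      rw [D.leibniz, hφ, smul_zero, add_zero, D.leibniz_pow]
      simp only [smul_eq_mul, nsmul_eq_mul, Nat.succ_sub_one, map_mul, map_natCast]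
      push_cast
      ring

/-- Descent: a minimal-degree polynomial relation among elements of the kernel
yields a polynomial relation with coefficients annihilated by `φ`. -/
theorem relation_of_eval₂_eq_zero {R : Type*} [CommRing R] [IsDomain R] [CharZero R]
    (D : Derivation R (MvPolynomial (Fin 2) R) (MvPolynomial (Fin 2) R))
    {t : MvPolynomial (Fin 2) R} (ht : D t ≠ 0)
    (φ : MvPolynomial (Fin 2) R →+* MvPolynomial (Fin 2) R) (hφ : ∀ s, D (φ s) = 0) :
    ∀ (n : ℕ) (p : Polynomial (MvPolynomial (Fin 2) R)), p ≠ 0 → p.natDegree ≤ n →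
      p.eval₂ φ t = 0 → ∃ c, c ≠ 0 ∧ φ c = 0 := by
  intro n
  induction n with
  | zero =>
    intro p hp hdeg hev
    obtain ⟨a, ha⟩ := Polynomial.natDegree_eq_zero.mp (Nat.le_zero.mp hdeg)
    refine ⟨a, fun h0 => hp ?_, ?_⟩
    · rw [← ha, h0, map_zero]
    · rw [← Polynomial.eval₂_C φ t (a := a), ha, hev]
  | succ n ih =>
    intro p hp hdeg hev
    by_cases h0 : p.natDegree = 0
    · obtain ⟨a, ha⟩ := Polynomial.natDegree_eq_zero.mp h0
      refine ⟨a, fun hz => hp ?_, ?_⟩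
      · rw [← ha, hz, map_zero]
      · rw [← Polynomial.eval₂_C φ t (a := a), ha, hev]
    · have hD := derivation_eval₂ D φ hφ t p
      rw [hev, map_zero] at hD
      have hder0 : p.derivative.eval₂ φ t = 0 := by
        rcases mul_eq_zero.mp hD.symm with h | h
        · exact h
        · exact absurd h ht
      have hdne : p.derivative ≠ 0 := by
        intro hd
        have hco := Polynomial.coeff_derivative p (p.natDegree - 1)
        rw [hd, Polynomial.coeff_zero] at hco
        have hnd : p.natDegree - 1 + 1 = p.natDegree := Nat.succ_pred_eq_of_pos
          (Nat.pos_of_ne_zero h0)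
        rw [hnd] at hco
        have hlc : p.coeff p.natDegree ≠ 0 := by
          rw [← Polynomial.leadingCoeff]
          exact Polynomial.leadingCoeff_ne_zero.mpr hp
        have hnz : ((p.natDegree - 1 : ℕ) + 1 : MvPolynomial (Fin 2) R) ≠ 0 := by
          have : (((p.natDegree - 1 : ℕ) + 1 : ℕ) : MvPolynomial (Fin 2) R)
              = ((p.natDegree - 1 : ℕ) : MvPolynomial (Fin 2) R) + 1 := by push_cast; ring
          rw [← this]
          exact Nat.cast_ne_zero.mpr (Nat.succ_ne_zero _)
        exact mul_ne_zero hlc hnz hco.symm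
      have hdlt := Polynomial.natDegree_derivative_lt h0
      exact ih p.derivative hdne (by omega) hder0


variable {S : Type*} [CommRing S]

/-- The polynomial in one variable over `MvPolynomial (Fin 2) S` assembled from an
indexed family of coefficients. -/
def qpoly {N : ℕ} (rr : Fin N × Fin N × Fin N → S) : Polynomial (MvPolynomial (Fin 2) S) :=
  ∑ i : Fin N, Polynomial.C
      (∑ jk : Fin N × Fin N, monomial
        (Finsupp.single (0 : Fin 2) (jk.1 : ℕ) + Finsupp.single (1 : Fin 2) (jk.2 : ℕ))
        (rr (i, jk.1, jk.2)))
    * Polynomial.X ^ (i : ℕ)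

theorem qpoly_ne_zero {N : ℕ} (rr : Fin N × Fin N × Fin N → S)
    (v0 : Fin N × Fin N × Fin N) (h0 : rr v0 ≠ 0) : qpoly rr ≠ 0 := by
  intro hq
  apply h0
  have hco := congrArg (fun p => Polynomial.coeff p (v0.1 : ℕ)) hq
  simp only [Polynomial.coeff_zero] at hco
  rw [qpoly, Polynomial.finset_sum_coeff] at hco
  simp only [Polynomial.coeff_C_mul, Polynomial.coeff_X_pow, mul_ite, mul_one, mul_zero] at hco
  rw [Finset.sum_eq_single v0.1 (fun i _ hne => by
      rw [if_neg (fun h => hne (Fin.val_injective h.symm))]) (fun h => absurd (Finset.mem_univ _) h)] at hco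
  rw [if_pos rfl] at hco
  -- now the inner mv-polynomial is zero; extract its coefficient
  have hcoeff := congrArg (coeff
    (Finsupp.single (0 : Fin 2) (v0.2.1 : ℕ) + Finsupp.single (1 : Fin 2) (v0.2.2 : ℕ))) hco
  rw [MvPolynomial.coeff_sum] at hcoeff
  simp only [MvPolynomial.coeff_monomial, MvPolynomial.coeff_zero] at hcoeff
  rw [Finset.sum_eq_single (v0.2.1, v0.2.2) (fun jk _ hne => by
      rw [if_neg]
      intro h
      apply hne
      have h1 := congrArg (fun u => u (0 : Fin 2)) h
      have h2 := congrArg (fun u => u (1 : Fin 2)) h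
      simp only [single_add_single_apply_zero, single_add_single_apply_one] at h1 h2
      exact Prod.ext (Fin.val_injective h1) (Fin.val_injective h2))
    (fun h => absurd (Finset.mem_univ _) h)] at hcoeff
  rw [if_pos rfl] at hcoeff
  exact hcoeff

theorem qpoly_eval₂ {N : ℕ} (rr : Fin N × Fin N × Fin N → S)
    {B : Type*} [CommRing B] [Algebra S B] (x y z : B) :
    (qpoly rr).eval₂ ((aeval ![y, z] : MvPolynomial (Fin 2) S →ₐ[S] B) : MvPolynomial (Fin 2) S →+* B) x
      = ∑ v : Fin N × Fin N × Fin N,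
          algebraMap S B (rr v) * x ^ (v.1 : ℕ) * y ^ (v.2.1 : ℕ) * z ^ (v.2.2 : ℕ) := by
  rw [qpoly, Polynomial.eval₂_finset_sum]
  conv_rhs => rw [Fintype.sum_prod_type]
  apply Finset.sum_congr rfl
  intro i _
  rw [Polynomial.eval₂_mul, Polynomial.eval₂_C, Polynomial.eval₂_X_pow]
  rw [map_sum, Finset.sum_mul]
  apply Finset.sum_congr rfl
  intro jk _
  simp only [monomial_eq_prod, map_mul, map_pow, AlgHom.coe_toRingHom, aeval_X, aeval_C,
    Matrix.cons_val_zero, Matrix.cons_val_one, Matrix.head_cons,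
    single_add_single_apply_zero, single_add_single_apply_one]
  ring

/-- Convert a two-variable polynomial relation into a nested univariate one. -/
theorem exists_nested_poly (c : MvPolynomial (Fin 2) S) (hc : c ≠ 0) {B : Type*} [CommRing B]
    [Algebra S B] (y z : B) :
    ∃ p : Polynomial (Polynomial S), p ≠ 0 ∧
      p.eval₂ ((Polynomial.aeval y : Polynomial S →ₐ[S] B) : Polynomial S →+* B) z
        = aeval ![y, z] c := by
  classical
  refine ⟨∑ m ∈ c.support,
    Polynomial.C (Polynomial.monomial (m 0) (coeff m c)) * Polynomial.X ^ (m 1), ?_, ?_⟩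
  · intro hq
    obtain ⟨m0, hm0⟩ := (MvPolynomial.support_nonempty.mpr hc)
    have hco := congrArg (fun p => Polynomial.coeff p (m0 1)) hq
    simp only [Polynomial.coeff_zero] at hco
    rw [Polynomial.finset_sum_coeff] at hco
    simp only [Polynomial.coeff_C_mul, Polynomial.coeff_X_pow, mul_ite, mul_one, mul_zero] at hco
    have hcoeff : (∑ m ∈ c.support,
        (if (m0 1 : ℕ) = (m 1) then Polynomial.monomial (m 0) (coeff m c) else 0).coeff (m0 0))
          = 0 := by
      rw [← Polynomial.finset_sum_coeff, hco, Polynomial.coeff_zero]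
    have hz : ∀ m ∈ c.support, m ≠ m0 →
        (if (m0 1 : ℕ) = (m 1) then Polynomial.monomial (m 0) (coeff m c) else 0).coeff (m0 0)
          = 0 := by
      intro m _ hne
      by_cases h1 : (m0 1 : ℕ) = m 1
      · rw [if_pos h1, Polynomial.coeff_monomial]
        rw [if_neg (fun h0 => hne (fin2_finsupp_ext h0 h1.symm))]
      · rw [if_neg h1, Polynomial.coeff_zero]
    rw [Finset.sum_eq_single m0 hz (fun h => absurd hm0 h)] at hcoeff
    rw [if_pos rfl, Polynomial.coeff_monomial, if_pos rfl] at hcoeff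
    exact (MvPolynomial.mem_support_iff.mp hm0) hcoeff
  · rw [Polynomial.eval₂_finset_sum]
    conv_rhs => rw [← support_sum_monomial_coeff c]
    rw [map_sum]
    apply Finset.sum_congr rfl
    intro m _
    rw [Polynomial.eval₂_mul, Polynomial.eval₂_C, Polynomial.eval₂_X_pow]
    rw [← Polynomial.C_mul_X_pow_eq_monomial]
    simp only [monomial_eq_prod, map_mul, map_pow, AlgHom.coe_toRingHom, aeval_X, aeval_C,
      Polynomial.aeval_X, Polynomial.aeval_C,
      Matrix.cons_val_zero, Matrix.cons_val_one, Matrix.head_cons]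


/-- compatibility of `MvPolynomial.map` with evaluation of univariate polynomials. -/
theorem map_polyaeval {R : Type*} [CommRing R] {K : Type*} [CommRing K] [Algebra R K]
    (q : Polynomial R) (h : MvPolynomial (Fin 2) R) :
    MvPolynomial.map (algebraMap R K) (Polynomial.aeval h q)
      = Polynomial.aeval (MvPolynomial.map (algebraMap R K) h) (q.map (algebraMap R K)) := by
  have hcomp : (MvPolynomial.map (algebraMap R K)).comp
      (algebraMap R (MvPolynomial (Fin 2) R))
        = (algebraMap K (MvPolynomial (Fin 2) K)).comp (algebraMap R K) := by
    apply RingHom.ext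
    intro r
    simp [MvPolynomial.algebraMap_eq]
  rw [Polynomial.aeval_def, Polynomial.hom_eval₂, hcomp, Polynomial.aeval_def,
    Polynomial.eval₂_map]

/-- if `f` is nonconstant over `R`, its image over `K` is nonconstant. -/
theorem map_nonconst {R : Type*} [CommRing R] {K : Type*} [CommRing K] [Algebra R K]
    (hinj : Function.Injective (algebraMap R K)) {f : MvPolynomial (Fin 2) R}
    (hf : ∀ r : R, f ≠ C r) :
    ∀ k : K, MvPolynomial.map (algebraMap R K) f ≠ C k := by
  intro k hk
  apply hf (coeff 0 f)
  apply MvPolynomial.ext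
  intro m
  have hm := congrArg (coeff m) hk
  rw [MvPolynomial.coeff_map, MvPolynomial.coeff_C] at hm
  rw [MvPolynomial.coeff_C]
  by_cases h0 : (0 : Fin 2 →₀ ℕ) = m
  · rw [if_pos h0, ← h0]
  · rw [if_neg h0] at hm ⊢
    exact hinj (by rw [hm, map_zero])


end KClosedAux


/-- **Lemma 3.2.** Let `R` be a UFD of characteristic zero and `D` a non-zero
`R`-derivation on `R[x,y]`.  If there is a closed polynomial `f ∈ R[x,y] \ R` with
`D f = 0` and `Q(R)[f] ∩ R[x,y] = R[f]`, then `R[x,y]^D = R[f]`. -/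
theorem kernel_eq_adjoin_of_closed_annihilated
    (R : Type*) [CommRing R] [IsDomain R] [UniqueFactorizationMonoid R] [CharZero R]
    (D : Derivation R (MvPolynomial (Fin 2) R) (MvPolynomial (Fin 2) R)) (hD : D ≠ 0)
    (f : MvPolynomial (Fin 2) R) (hf : ∀ r : R, f ≠ C r)
    (hclosed : ∀ g : MvPolynomial (Fin 2) R,
      IsIntegral (Algebra.adjoin R {f}) g → g ∈ Algebra.adjoin R {f})
    (hcap : ∀ g : MvPolynomial (Fin 2) R,
      MvPolynomial.map (algebraMap R (FractionRing R)) g ∈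
          Algebra.adjoin (FractionRing R)
            {MvPolynomial.map (algebraMap R (FractionRing R)) f} →
        g ∈ Algebra.adjoin R {f})
    (hDf : D f = 0) :
    ∀ g : MvPolynomial (Fin 2) R, D g = 0 ↔ g ∈ Algebra.adjoin R {f} := by
  classical
  have hker : Algebra.adjoin R {f} ≤ KClosedAux.kerSubalgebra D := by
    apply Algebra.adjoin_le
    intro x hx
    rw [Set.mem_singleton_iff] at hx
    subst hx
    exact hDf
  intro g
  constructor
  case mpr => exact fun hg => hker hg
  intro hDg
  by_cases hg0 : g = 0
  · rw [hg0]; exact Subalgebra.zero_mem _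
  -- notation
  set π : MvPolynomial (Fin 2) R →+* MvPolynomial (Fin 2) (FractionRing R) :=
    (MvPolynomial.map (algebraMap R (FractionRing R))) with hπdef
  have hπinj : Function.Injective π :=
    MvPolynomial.map_injective _ (IsFractionRing.injective R (FractionRing R))
  -- a variable not killed by D
  obtain ⟨i0, ht⟩ : ∃ i : Fin 2, D (X i) ≠ 0 := by
    by_contra hno
    push_neg at hno
    apply hD
    have htop : (⊤ : Subalgebra R (MvPolynomial (Fin 2) R)) ≤ KClosedAux.kerSubalgebra D := by
      rw [← MvPolynomial.adjoin_range_X]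
      apply Algebra.adjoin_le
      rintro x ⟨i, rfl⟩
      exact hno i
    apply Derivation.ext
    intro a
    have ha : a ∈ KClosedAux.kerSubalgebra D := htop trivial
    simpa using (KClosedAux.mem_kerSubalgebra_iff D a).mp ha
  set t : MvPolynomial (Fin 2) R := X i0 with htdef
  -- linear dependence of powers over the fraction field
  obtain ⟨N, hN1, hnli⟩ := KClosedAux.not_linearIndependent_triple (π t) (π f) (π g)
  obtain ⟨cc, hsum, v0, hv0⟩ := Fintype.not_linearIndependent_iff.mp hnli
  -- clear denominators
  obtain ⟨b, hb⟩ := IsLocalization.exist_integer_multiples (nonZeroDivisors R) Finset.univ cc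
  have hb' : ∀ v, ∃ x : R, algebraMap R (FractionRing R) x = (b : R) • cc v := by
    intro v
    exact hb v (Finset.mem_univ v)
  choose rr hrr using hb'
  have hbK : algebraMap R (FractionRing R) (b : R) ≠ 0 := by
    have : (b : R) ≠ 0 := nonZeroDivisors.coe_ne_zero b
    exact fun h => this (IsFractionRing.injective R (FractionRing R) (by rw [h, map_zero]))
  have hrrv0 : rr v0 ≠ 0 := by
    intro h
    have h2 := hrr v0
    rw [h, map_zero, Algebra.smul_def] at h2
    exact (mul_ne_zero hbK hv0) h2.symm
  -- the relation over R
  have hZ : (∑ v : Fin N × Fin N × Fin N,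
      algebraMap R (MvPolynomial (Fin 2) R) (rr v) * t ^ (v.1 : ℕ) * f ^ (v.2.1 : ℕ)
        * g ^ (v.2.2 : ℕ)) = 0 := by
    apply hπinj
    rw [map_zero, map_sum]
    have hterm : ∀ v : Fin N × Fin N × Fin N,
        π (algebraMap R (MvPolynomial (Fin 2) R) (rr v) * t ^ (v.1 : ℕ) * f ^ (v.2.1 : ℕ)
            * g ^ (v.2.2 : ℕ))
          = C (algebraMap R (FractionRing R) (b : R))
            * (cc v • (π t ^ (v.1 : ℕ) * π f ^ (v.2.1 : ℕ) * π g ^ (v.2.2 : ℕ))) := by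
      intro v
      rw [map_mul, map_mul, map_mul, map_pow, map_pow, map_pow]
      rw [show π (algebraMap R (MvPolynomial (Fin 2) R) (rr v))
          = C (algebraMap R (FractionRing R) (rr v)) by
        rw [MvPolynomial.algebraMap_eq, hπdef, MvPolynomial.map_C]]
      rw [hrr v, Algebra.smul_def, map_mul, smul_eq_C_mul]
      ring
    calc ∑ v : Fin N × Fin N × Fin N, π (algebraMap R (MvPolynomial (Fin 2) R) (rr v)
            * t ^ (v.1 : ℕ) * f ^ (v.2.1 : ℕ) * g ^ (v.2.2 : ℕ))
        = ∑ v : Fin N × Fin N × Fin N, C (algebraMap R (FractionRing R) (b : R))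
            * (cc v • (π t ^ (v.1 : ℕ) * π f ^ (v.2.1 : ℕ) * π g ^ (v.2.2 : ℕ))) :=
          Finset.sum_congr rfl (fun v _ => hterm v)
      _ = C (algebraMap R (FractionRing R) (b : R))
            * ∑ v : Fin N × Fin N × Fin N,
              cc v • (π t ^ (v.1 : ℕ) * π f ^ (v.2.1 : ℕ) * π g ^ (v.2.2 : ℕ)) := by
          rw [Finset.mul_sum]
      _ = 0 := by rw [hsum, mul_zero]
  -- assemble into a univariate polynomial relation and apply descent
  have hq0 : KClosedAux.qpoly rr ≠ 0 := KClosedAux.qpoly_ne_zero rr v0 hrrv0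
  have hqe : (KClosedAux.qpoly rr).eval₂
      ((aeval ![f, g] : MvPolynomial (Fin 2) R →ₐ[R] MvPolynomial (Fin 2) R) :
        MvPolynomial (Fin 2) R →+* MvPolynomial (Fin 2) R) t = 0 := by
    rw [KClosedAux.qpoly_eval₂]
    exact hZ
  have hφ : ∀ s, D (((aeval ![f, g] : MvPolynomial (Fin 2) R →ₐ[R] MvPolynomial (Fin 2) R) :
      MvPolynomial (Fin 2) R →+* MvPolynomial (Fin 2) R) s) = 0 := by
    intro s
    have hker2 : Algebra.adjoin R {f, g} ≤ KClosedAux.kerSubalgebra D := by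
      apply Algebra.adjoin_le
      rintro x hx
      rcases hx with hx | hx
      · rw [hx]; exact hDf
      · rw [Set.mem_singleton_iff] at hx; rw [hx]; exact hDg
    have hmem : aeval ![f, g] s ∈ Algebra.adjoin R {f, g} := by
      have h1 : s ∈ Algebra.adjoin R (Set.range (X : Fin 2 → MvPolynomial (Fin 2) R)) := by
        rw [MvPolynomial.adjoin_range_X]; trivial
      have h3 : aeval ![f, g] s ∈ (Algebra.adjoin R
          (Set.range (X : Fin 2 → MvPolynomial (Fin 2) R))).map (aeval ![f, g]) :=
        ⟨s, h1, rfl⟩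
      rw [AlgHom.map_adjoin] at h3
      refine Algebra.adjoin_mono ?_ h3
      rintro x ⟨y, ⟨i, rfl⟩, rfl⟩
      revert i
      rw [Fin.forall_fin_two]
      constructor
      · rw [aeval_X]; left; rfl
      · rw [aeval_X]; right; rfl
    exact hker2 hmem
  obtain ⟨c, hc0, hcφ⟩ := KClosedAux.relation_of_eval₂_eq_zero D ht _ hφ
    (KClosedAux.qpoly rr).natDegree (KClosedAux.qpoly rr) hq0 le_rfl hqe
  -- nested relation and integrality
  obtain ⟨p, hp0, hpe⟩ := KClosedAux.exists_nested_poly c hc0 f g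
  have hpev : p.eval₂ ((Polynomial.aeval f : Polynomial R →ₐ[R] MvPolynomial (Fin 2) R) :
      Polynomial R →+* MvPolynomial (Fin 2) R) g = 0 := by
    rw [hpe]
    exact hcφ
  set ψ : Polynomial R →+* MvPolynomial (Fin 2) R :=
    ((Polynomial.aeval f : Polynomial R →ₐ[R] MvPolynomial (Fin 2) R) :
      Polynomial R →+* MvPolynomial (Fin 2) R) with hψdef
  have hint0 : ψ.IsIntegralElem (ψ p.leadingCoeff * g) :=
    RingHom.isIntegralElem_leadingCoeff_mul ψ p g hpev
  have hint : IsIntegral (Algebra.adjoin R {f}) (ψ p.leadingCoeff * g) := by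
    obtain ⟨q, hqm, hqe2⟩ := hint0
    have hmemψ : ∀ r : Polynomial R, ψ r ∈ (Algebra.adjoin R {f}).toSubring := by
      intro r
      rw [Algebra.adjoin_singleton_eq_range_aeval]
      exact ⟨r, rfl⟩
    refine ⟨q.map (ψ.codRestrict (Algebra.adjoin R {f}).toSubring hmemψ), hqm.map _, ?_⟩
    rw [Polynomial.eval₂_map]
    have hcomp : (algebraMap (Algebra.adjoin R {f}) (MvPolynomial (Fin 2) R)).comp
        (ψ.codRestrict (Algebra.adjoin R {f}).toSubring hmemψ) = ψ := by
      apply RingHom.ext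
      intro r
      rfl
    rw [hcomp]
    exact hqe2
  have hmem1 : ψ p.leadingCoeff * g ∈ Algebra.adjoin R {f} := hclosed _ hint
  obtain ⟨Q, hQ⟩ : ∃ Q : Polynomial R, Polynomial.aeval f Q = ψ p.leadingCoeff * g := by
    rw [Algebra.adjoin_singleton_eq_range_aeval] at hmem1
    exact hmem1
  -- go to the fraction field
  have hlc : p.leadingCoeff ≠ 0 := Polynomial.leadingCoeff_ne_zero.mpr hp0
  set lcK : Polynomial (FractionRing R) :=
    p.leadingCoeff.map (algebraMap R (FractionRing R)) with hlcKdef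
  set QK : Polynomial (FractionRing R) := Q.map (algebraMap R (FractionRing R)) with hQKdef
  have hπQ : Polynomial.aeval (π f) QK = Polynomial.aeval (π f) lcK * π g := by
    have h1 := congrArg π hQ
    rw [KClosedAux.map_polyaeval] at h1
    rw [map_mul] at h1
    rw [show π (ψ p.leadingCoeff) = Polynomial.aeval (π f) lcK from by
      rw [hψdef]
      exact KClosedAux.map_polyaeval p.leadingCoeff f] at h1
    exact h1
  have hlcK : lcK ≠ 0 := by
    intro h
    apply hlc
    have : Function.Injective (Polynomial.map (algebraMap R (FractionRing R))) :=
      fun x y hxy => Polynomial.map_injective _ (IsFractionRing.injective R (FractionRing R)) hxy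
    exact this (by rw [← hlcKdef, h, Polynomial.map_zero])
  have hπf_nc : ∀ k : FractionRing R, π f ≠ C k :=
    KClosedAux.map_nonconst (IsFractionRing.injective R (FractionRing R)) hf
  have htr : ∀ q : Polynomial (FractionRing R), Polynomial.aeval (π f) q = 0 → q = 0 :=
    fun q hq => KClosedAux.eq_zero_of_aeval_eq_zero hπf_nc hq
  have hgK : π g ≠ 0 := fun h => hg0 (hπinj (by rw [h, map_zero]))
  have haevlcK : Polynomial.aeval (π f) lcK ≠ 0 := fun h => hlcK (htr _ h)
  have hQK0 : QK ≠ 0 := by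
    intro h
    rw [h, map_zero] at hπQ
    exact (mul_ne_zero haevlcK hgK) hπQ.symm
  -- gcd reduction
  set d := GCDMonoid.gcd lcK QK with hddef
  have hd0 : d ≠ 0 := fun h => hlcK (((gcd_eq_zero_iff lcK QK).mp h).1)
  set a1 := lcK / d with ha1def
  set b1 := QK / d with hb1def
  have hda : d * a1 = lcK := EuclideanDomain.mul_div_cancel' hd0 (gcd_dvd_left _ _)
  have hdb : d * b1 = QK := EuclideanDomain.mul_div_cancel' hd0 (gcd_dvd_right _ _)
  have hcop : IsCoprime a1 b1 := isCoprime_div_gcd_div_gcd hQK0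
  have hdK : Polynomial.aeval (π f) d ≠ 0 := fun h => hd0 (htr _ h)
  have hrel : Polynomial.aeval (π f) b1 = Polynomial.aeval (π f) a1 * π g := by
    apply mul_left_cancel₀ hdK
    rw [← map_mul, hdb, hπQ, ← hda, map_mul]
    ring
  obtain ⟨u, v, huv⟩ := hcop
  have hub : Polynomial.aeval (π f) u * Polynomial.aeval (π f) a1
      + Polynomial.aeval (π f) v * (Polynomial.aeval (π f) a1 * π g) = 1 := by
    have h2 := congrArg (Polynomial.aeval (π f)) huv
    rw [map_add, map_mul, map_mul, map_one, hrel] at h2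
    exact h2
  have hunit : IsUnit (Polynomial.aeval (π f) a1) := by
    apply IsUnit.of_mul_eq_one
      (Polynomial.aeval (π f) u + Polynomial.aeval (π f) v * π g)
    linear_combination hub
  obtain ⟨k1, hk1⟩ := KClosedAux.eq_C_of_isUnit hunit
  have hk1ne : k1 ≠ 0 := by
    intro h
    rw [h, map_zero] at hk1
    exact hunit.ne_zero hk1
  have ha1C : a1 = Polynomial.C k1 := by
    have h3 : Polynomial.aeval (π f) (a1 - Polynomial.C k1) = 0 := by
      rw [map_sub, Polynomial.aeval_C, hk1, MvPolynomial.algebraMap_eq, sub_self]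
    have h4 := htr _ h3
    rwa [sub_eq_zero] at h4
  have hgrepr : π g = Polynomial.aeval (π f) (Polynomial.C k1⁻¹ * b1) := by
    rw [map_mul, Polynomial.aeval_C, hrel, ha1C, Polynomial.aeval_C]
    rw [← mul_assoc, MvPolynomial.algebraMap_eq, ← map_mul, inv_mul_cancel₀ hk1ne, map_one,
      one_mul]
  apply hcap
  rw [Algebra.adjoin_singleton_eq_range_aeval]
  exact ⟨Polynomial.C k1⁻¹ * b1, hgrepr.symm⟩

end
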